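/- In the category whose objects are topological spaces and whose morphisms are local homeomorphisms, the object P described as the étalé space of the sheaf of local homeomorphisms into M over N (with projections ev : P → M and q : P → N) satisfies the universal property of the binary product of M and N: for any space T with local homeomorphisms a : T → M and b : T → N, there is a unique local homeomorphism c : T → P with ev ∘ c = a and q ∘ c = b, namely c(t) = germ_{b(t)}(a ∘ (b|_W)⁻¹) for W a neighborhood of t on which b is an open embedding. -/

import Mathlib

universe u

variable (M N : Type u) [TopologicalSpace M] [TopologicalSpace N]

/-- A local homeomorphism into `M` defined on an open subset of `N`. -/
structure LocalSection where
  dom : Set N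
  isOpen_dom : IsOpen dom
  toFun : N → M
  isLocalHomeomorphOn : IsLocalHomeomorphOn toFun dom

/-- Two local sections have the same germ at `y` if they agree on an open
neighborhood of `y`. -/
def germRel (y : N) (a b : { r : LocalSection M N // y ∈ r.dom }) : Prop :=
  ∃ W : Set N, IsOpen W ∧ y ∈ W ∧ W ⊆ a.1.dom ∩ b.1.dom ∧ Set.EqOn a.1.toFun b.1.toFun W

/-- The étalé space of the sheaf on `N` of local homeomorphisms into `M`: points are
germs of local homeomorphisms defined near points of `N`. -/
def GermSp : Type u :=
  Σ y : N, Quot (germRel M N y)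

/-- The germ topology: basic open sets are the sets of germs of a fixed local section. -/
instance : TopologicalSpace (GermSp M N) :=
  TopologicalSpace.generateFrom
    { B | ∃ r : LocalSection M N,
        B = { p : GermSp M N | ∃ h : p.1 ∈ r.dom, p.2 = Quot.mk _ ⟨r, h⟩ } }

/-- The étalé projection `q : P → N`. -/
def germProj : GermSp M N → N := Sigma.fst

/-- The evaluation map `ev : P → M`, sending `germ_y f` to `f y`. -/
def germEval : GermSp M N → M := fun p =>
  Quot.lift (fun s : { r : LocalSection M N // p.1 ∈ r.dom } => s.1.toFun p.1)
    (fun _ _ h => by obtain ⟨W, _, hyW, _, heq⟩ := h; exact heq hyW) p.2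

namespace GermAux

variable {M N : Type u} [TopologicalSpace M] [TopologicalSpace N]
variable {T : Type u} [TopologicalSpace T]

/-- The equivalence relation. -/
lemma germRel_equiv (y : N) : Equivalence (germRel M N y) := by
  constructor
  · intro a
    exact ⟨a.1.dom, a.1.isOpen_dom, a.2, by simp, fun x _ => rfl⟩
  · rintro a b ⟨W, hW, hyW, hsub, heq⟩
    exact ⟨W, hW, hyW, fun x hx => ⟨(hsub hx).2, (hsub hx).1⟩, heq.symm⟩
  · rintro a b c ⟨W, hW, hyW, hsub, heq⟩ ⟨W', hW', hyW', hsub', heq'⟩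
    refine ⟨W ∩ W', hW.inter hW', ⟨hyW, hyW'⟩, ?_, ?_⟩
    · exact fun x hx => ⟨(hsub hx.1).1, (hsub' hx.2).2⟩
    · exact fun x hx => (heq hx.1).trans (heq' hx.2)

/-- Basic open sets. -/
def bas (r : LocalSection M N) : Set (GermSp M N) :=
  { p : GermSp M N | ∃ h : p.1 ∈ r.dom, p.2 = Quot.mk _ ⟨r, h⟩ }

lemma isOpen_bas (r : LocalSection M N) : IsOpen (bas r) :=
  TopologicalSpace.isOpen_generateFrom_of_mem ⟨r, rfl⟩

lemma eq_of_mem_bas {r : LocalSection M N} {p q : GermSp M N}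
    (hp : p ∈ bas r) (hq : q ∈ bas r) (h : p.1 = q.1) : p = q := by
  obtain ⟨y, g⟩ := p
  obtain ⟨y', g'⟩ := q
  dsimp at h
  subst h
  obtain ⟨h1, e1⟩ := hp
  obtain ⟨h2, e2⟩ := hq
  have hg : g = g' := e1.trans e2.symm
  rw [hg]

lemma continuous_germProj : Continuous (germProj M N) := by
  rw [continuous_def]
  intro U hU
  rw [isOpen_iff_forall_mem_open]
  rintro ⟨y, g⟩ hy
  obtain ⟨⟨r, hr⟩, hg⟩ := Quot.exists_rep g
  set r' : LocalSection M N :=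
    ⟨r.dom ∩ U, r.isOpen_dom.inter hU, r.toFun,
      r.isLocalHomeomorphOn.mono Set.inter_subset_left⟩ with hr'def
  refine ⟨bas r', fun p hp => hp.choose.2, isOpen_bas r', ⟨⟨hr, hy⟩, ?_⟩⟩
  rw [← hg]
  exact Quot.sound ⟨r.dom ∩ U, r.isOpen_dom.inter hU, ⟨hr, hy⟩,
    fun x hx => ⟨hx.1, hx⟩, fun x _ => rfl⟩

/-- The local section obtained from a chart of `b`. -/
def secOf (a : T → M) (ha : IsLocalHomeomorph a) (e : OpenPartialHomeomorph T N) :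
    LocalSection M N where
  dom := e.target
  isOpen_dom := e.open_target
  toFun := a ∘ e.symm
  isLocalHomeomorphOn := by
    intro y hy
    obtain ⟨f, hf, hfa⟩ := ha (e.symm y)
    refine ⟨e.symm.trans f, ?_, ?_⟩
    · rw [OpenPartialHomeomorph.trans_source, OpenPartialHomeomorph.symm_source]
      exact ⟨hy, by simpa using hf⟩
    · rw [OpenPartialHomeomorph.coe_trans, hfa]

variable {a : T → M} {b : T → N} (ha : IsLocalHomeomorph a) (hb : IsLocalHomeomorph b)

lemma mem_dom {e : OpenPartialHomeomorph T N} (he : b = e) {t : T} (ht : t ∈ e.source) :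
    b t ∈ (secOf a ha e).dom := he ▸ e.map_source ht

lemma germ_sound {e e' : OpenPartialHomeomorph T N} (he : b = e) (he' : b = e')
    {t : T} (ht : t ∈ e.source) (ht' : t ∈ e'.source) :
    germRel M N (b t) ⟨secOf a ha e, mem_dom ha he ht⟩ ⟨secOf a ha e', mem_dom ha he' ht'⟩ := by
  refine ⟨e '' (e.source ∩ e'.source),
    e.isOpen_image_of_subset_source (e.open_source.inter e'.open_source)
      Set.inter_subset_left, ⟨t, ⟨ht, ht'⟩, (congrFun he t).symm⟩, ?_, ?_⟩
  · rintro y ⟨x, ⟨hx, hx'⟩, rfl⟩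
    refine ⟨e.map_source hx, ?_⟩
    show e x ∈ e'.target
    rw [← congrFun he x, he']
    exact e'.map_source hx'
  · rintro y ⟨x, ⟨hx, hx'⟩, rfl⟩
    show a (e.symm (e x)) = a (e'.symm (e x))
    rw [e.left_inv hx, ← congrFun he x, he', e'.left_inv hx']

/-- The product comparison map `c : T → GermSp M N`. -/
noncomputable def mk (t : T) : GermSp M N :=
  ⟨b t, Quot.mk _ ⟨secOf a ha (hb t).choose,
    mem_dom ha (hb t).choose_spec.2 (hb t).choose_spec.1⟩⟩

lemma mk_fst (t : T) : (mk ha hb t).1 = b t := rfl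

lemma mk_snd {e : OpenPartialHomeomorph T N} (he : b = e) {t : T} (ht : t ∈ e.source) :
    (mk ha hb t).2 = Quot.mk _ ⟨secOf a ha e, mem_dom ha he ht⟩ :=
  Quot.sound (germ_sound ha (hb t).choose_spec.2 he (hb t).choose_spec.1 ht)

lemma germEval_eq {p : GermSp M N} {r : LocalSection M N} {h : p.1 ∈ r.dom}
    (hp : p.2 = Quot.mk _ ⟨r, h⟩) : germEval M N p = r.toFun p.1 := by
  show Quot.lift _ _ p.2 = _
  rw [hp]

lemma continuous_mk : Continuous (mk ha hb) := by
  rw [continuous_generateFrom_iff]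
  rintro B ⟨r, rfl⟩
  rw [isOpen_iff_forall_mem_open]
  intro t ht
  obtain ⟨h1, h2⟩ := ht
  obtain ⟨e, hte, he⟩ := hb t
  have h3 := (mk_snd ha hb he hte).symm.trans h2
  obtain ⟨W, hW, hbtW, hWsub, hWeq⟩ := ((germRel_equiv (b t)).eqvGen_iff).mp (Quot.eqvGen_exact h3)
  refine ⟨e.source ∩ b ⁻¹' W, ?_, (e.open_source.inter (hW.preimage hb.continuous)),
    ⟨hte, hbtW⟩⟩
  rintro x ⟨hxe, hxW⟩
  refine ⟨(hWsub hxW).2, ?_⟩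
  rw [mk_snd ha hb he hxe]
  exact Quot.sound ⟨W, hW, hxW, fun z hz => ⟨(hWsub hz).1, (hWsub hz).2⟩, hWeq⟩

/-- A chart for `mk`. -/
noncomputable def chart {e : OpenPartialHomeomorph T N} (he : b = e) :
    OpenPartialHomeomorph T (GermSp M N) where
  toFun := mk ha hb
  invFun := fun p => e.symm (germProj M N p)
  source := e.source
  target := bas (secOf a ha e)
  map_source' := fun x hx => ⟨mem_dom ha he hx, mk_snd ha hb he hx⟩
  map_target' := fun p hp => e.map_target hp.choose
  left_inv' := fun x hx => by
    show e.symm (b x) = x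
    rw [he]; exact e.left_inv hx
  right_inv' := by
    intro p hp
    have hx : e.symm p.1 ∈ e.source := e.map_target hp.choose
    have hbx : b (e.symm p.1) = p.1 := by rw [he]; exact e.right_inv hp.choose
    exact eq_of_mem_bas ⟨mem_dom ha he hx, mk_snd ha hb he hx⟩ hp hbx
  open_source := e.open_source
  open_target := isOpen_bas _
  continuousOn_toFun := (continuous_mk ha hb).continuousOn
  continuousOn_invFun := e.continuousOn_symm.comp continuous_germProj.continuousOn
    (fun p hp => hp.choose)

end GermAux

/-- In the category of topological spaces and local homeomorphisms, the étalé space `P`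
of the sheaf of local homeomorphisms into `M` over `N`, with `ev : P → M` and
`q : P → N`, is the binary product of `M` and `N`: for any space `T` with local
homeomorphisms `a : T → M` and `b : T → N` there is a unique local homeomorphism
`c : T → P` with `ev ∘ c = a` and `q ∘ c = b`. -/
theorem stmt_16 (T : Type u) [TopologicalSpace T] (a : T → M) (b : T → N)
    (ha : IsLocalHomeomorph a) (hb : IsLocalHomeomorph b) :
    ∃! c : T → GermSp M N, IsLocalHomeomorph c ∧
      germEval M N ∘ c = a ∧ germProj M N ∘ c = b := by
  refine ⟨GermAux.mk ha hb, ⟨?_, ?_, rfl⟩, ?_⟩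
  · intro t
    obtain ⟨e, hte, he⟩ := hb t
    exact ⟨GermAux.chart ha hb he, hte, rfl⟩
  · funext t
    obtain ⟨e, hte, he⟩ := hb t
    have h := GermAux.germEval_eq (GermAux.mk_snd ha hb he hte)
    rw [Function.comp_apply, h]
    show a (e.symm (b t)) = a t
    rw [he, e.left_inv hte]
  · rintro c' ⟨hc', hev, hq⟩
    funext t
    obtain ⟨e, hte, he⟩ := hb t
    have h1 : (c' t).1 = b t := congrFun hq t
    obtain ⟨⟨r, hr⟩, hg⟩ := Quot.exists_rep (c' t).2
    have hbas : c' t ∈ GermAux.bas r := ⟨hr, hg.symm⟩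
    have hopen : IsOpen (c' ⁻¹' GermAux.bas r) :=
      (GermAux.isOpen_bas r).preimage hc'.continuous
    have hVopen : IsOpen (c' ⁻¹' GermAux.bas r ∩ e.source) := hopen.inter e.open_source
    have htV : t ∈ c' ⁻¹' GermAux.bas r ∩ e.source := ⟨hbas, hte⟩
    have hWopen : IsOpen (e '' (c' ⁻¹' GermAux.bas r ∩ e.source)) :=
      e.isOpen_image_of_subset_source hVopen Set.inter_subset_right
    have hbtr : b t ∈ r.dom := h1 ▸ hr
    have key : ∀ y ∈ e '' (c' ⁻¹' GermAux.bas r ∩ e.source),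
        y ∈ r.dom ∧ r.toFun y = a (e.symm y) := by
      rintro y ⟨x, ⟨hxU, hxe⟩, rfl⟩
      obtain ⟨hx1, hx2⟩ := hxU
      have hcx1 : (c' x).1 = b x := congrFun hq x
      have hbex : b x = e x := congrFun he x
      have hdom : e x ∈ r.dom := by rw [← hbex, ← hcx1]; exact hx1
      have heval : germEval M N (c' x) = r.toFun (c' x).1 := GermAux.germEval_eq hx2
      refine ⟨hdom, ?_⟩
      rw [e.left_inv hxe]
      have h2 : r.toFun (e x) = r.toFun (c' x).1 := by rw [hcx1, hbex]
      rw [h2, ← heval]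
      exact congrFun hev x
    have hrel : germRel M N (b t) ⟨r, hbtr⟩
        ⟨GermAux.secOf a ha e, GermAux.mem_dom ha he hte⟩ := by
      refine ⟨e '' (c' ⁻¹' GermAux.bas r ∩ e.source), hWopen,
        ⟨t, htV, (congrFun he t).symm⟩, ?_, ?_⟩
      · rintro y ⟨x, hx, rfl⟩
        exact ⟨(key _ ⟨x, hx, rfl⟩).1, e.map_source hx.2⟩
      · intro y hy
        exact (key y hy).2
    have hmkbas : GermAux.mk ha hb t ∈ GermAux.bas r := by
      refine ⟨hbtr, ?_⟩
      rw [GermAux.mk_snd ha hb he hte]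
      exact (Quot.sound hrel).symm
    exact GermAux.eq_of_mem_bas hbas hmkbas h1
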